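/- Let Γ be a group and θ : Γ → Γ an injective group homomorphism. Then there exist a group G, an injective group homomorphism i : Γ → G, and a group automorphism φ : G ≅ G such that φ(i(g)) = i(θ(g)) for all g ∈ Γ. (That is, every injective endomorphism of a group extends to an automorphism of some larger group.) -/
import Mathlib


universe u

namespace Stmt8Aux

variable {Γ : Type u} [Group Γ]

/-- Iterates of `θ` as a monoid hom. -/
def pw (θ : Γ →* Γ) : ℕ → Γ →* Γ
  | 0 => MonoidHom.id Γ
  | n+1 => (pw θ n).comp θ

@[simp] lemma pw_zero (θ : Γ →* Γ) (g : Γ) : pw θ 0 g = g := rfl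

@[simp] lemma pw_succ (θ : Γ →* Γ) (n : ℕ) (g : Γ) : pw θ (n+1) g = pw θ n (θ g) := rfl

@[simp] lemma pw_pw (θ : Γ →* Γ) (n m : ℕ) (g : Γ) :
    pw θ n (pw θ m g) = pw θ (n + m) g := by
  induction m generalizing g with
  | zero => simp
  | succ m ih => simpa [← Nat.add_assoc] using ih (g := θ g)

lemma pw_comm (θ : Γ →* Γ) (n : ℕ) (g : Γ) : θ (pw θ n g) = pw θ n (θ g) := by
  induction n generalizing g with
  | zero => simp
  | succ n ih => simpa using ih (g := θ g)

lemma pw_inj {θ : Γ →* Γ} (hθ : Function.Injective θ) (n : ℕ) :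
    Function.Injective (pw θ n) := by
  induction n with
  | zero => exact fun a b h => h
  | succ n ih => exact fun a b h => hθ (ih h)

lemma shift {θ : Γ →* Γ} {a b : ℕ} {g h : Γ} (H : pw θ a g = pw θ b h) (k : ℕ) :
    pw θ (k + a) g = pw θ (k + b) h := by
  rw [← pw_pw, H, pw_pw]

variable (θ : Γ →* Γ) (hθ : Function.Injective θ)

/-- The setoid underlying the direct limit of `Γ →θ→ Γ →θ→ ⋯`. -/
def sett : Setoid (ℕ × Γ) where
  r a b := pw θ b.1 a.2 = pw θ a.1 b.2
  iseqv := by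
    constructor
    · intro a; rfl
    · intro a b h; exact h.symm
    · rintro ⟨n, g⟩ ⟨m, h⟩ ⟨k, l⟩ h1 h2
      dsimp at h1 h2 ⊢
      apply pw_inj hθ m
      calc pw θ m (pw θ k g) = pw θ k (pw θ m g) := by simp [Nat.add_comm]
        _ = pw θ k (pw θ n h) := by rw [h1]
        _ = pw θ n (pw θ k h) := by simp [Nat.add_comm]
        _ = pw θ n (pw θ m l) := by rw [h2]
        _ = pw θ m (pw θ n l) := by simp [Nat.add_comm]

/-- The direct limit. -/
def G : Type u := Quotient (sett θ hθ)

def mk (a : ℕ × Γ) : G θ hθ := Quotient.mk (sett θ hθ) a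

lemma sound {a b : ℕ × Γ} (h : pw θ b.1 a.2 = pw θ a.1 b.2) : mk θ hθ a = mk θ hθ b :=
  Quotient.sound h

lemma exact {a b : ℕ × Γ} (h : mk θ hθ a = mk θ hθ b) : pw θ b.1 a.2 = pw θ a.1 b.2 :=
  Quotient.exact h

def mul' : G θ hθ → G θ hθ → G θ hθ :=
  Quotient.map₂ (fun a b => (a.1 + b.1, pw θ b.1 a.2 * pw θ a.1 b.2))
    (by
      rintro ⟨n, g⟩ ⟨n', g'⟩ h1 ⟨m, h⟩ ⟨m', h'⟩ h2
      show pw θ (n' + m') _ = pw θ (n + m) _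
      replace h1 : pw θ n' g = pw θ n g' := h1
      replace h2 : pw θ m' h = pw θ m h' := h2
      simp only [map_mul, pw_pw]
      have e1 := shift h1 (m' + m)
      have e2 := shift h2 (n' + n)
      congr 1
      · calc pw θ (n' + m' + m) g = pw θ (m' + m + n') g := by
              rw [show n' + m' + m = m' + m + n' by omega]
          _ = pw θ (m' + m + n) g' := e1
          _ = pw θ (n + m + m') g' := by rw [show m' + m + n = n + m + m' by omega]
      · calc pw θ (n' + m' + n) h = pw θ (n' + n + m') h := by
              rw [show n' + m' + n = n' + n + m' by omega]
          _ = pw θ (n' + n + m) h' := e2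
          _ = pw θ (n + m + n') h' := by rw [show n' + n + m = n + m + n' by omega])

lemma mul'_mk (a b : ℕ × Γ) :
    mul' θ hθ (mk θ hθ a) (mk θ hθ b) =
      mk θ hθ (a.1 + b.1, pw θ b.1 a.2 * pw θ a.1 b.2) := rfl

def inv' : G θ hθ → G θ hθ :=
  Quotient.map (fun a => (a.1, a.2⁻¹))
    (by
      rintro ⟨n, g⟩ ⟨m, h⟩ h1
      replace h1 : pw θ m g = pw θ n h := h1
      show pw θ m g⁻¹ = pw θ n h⁻¹
      simp only [map_inv]
      exact congrArg Inv.inv h1)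

lemma inv'_mk (a : ℕ × Γ) : inv' θ hθ (mk θ hθ a) = mk θ hθ (a.1, a.2⁻¹) := rfl

instance : Group (G θ hθ) where
  mul := mul' θ hθ
  one := mk θ hθ (0, 1)
  inv := inv' θ hθ
  mul_assoc := by
    rintro ⟨a⟩ ⟨b⟩ ⟨c⟩
    show mul' θ hθ (mul' θ hθ (mk θ hθ a) (mk θ hθ b)) (mk θ hθ c)
      = mul' θ hθ (mk θ hθ a) (mul' θ hθ (mk θ hθ b) (mk θ hθ c))
    rw [mul'_mk, mul'_mk, mul'_mk, mul'_mk]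
    apply sound
    simp [map_mul, pw_pw, mul_assoc, Nat.add_comm, Nat.add_left_comm, Nat.add_assoc]
  one_mul := by
    rintro ⟨a⟩
    show mul' θ hθ (mk θ hθ (0, 1)) (mk θ hθ a) = mk θ hθ a
    rw [mul'_mk]
    apply sound
    simp
  mul_one := by
    rintro ⟨a⟩
    show mul' θ hθ (mk θ hθ a) (mk θ hθ (0, 1)) = mk θ hθ a
    rw [mul'_mk]
    apply sound
    simp
  inv_mul_cancel := by
    rintro ⟨a⟩
    show mul' θ hθ (inv' θ hθ (mk θ hθ a)) (mk θ hθ a) = mk θ hθ (0, 1)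
    rw [inv'_mk, mul'_mk]
    apply sound
    simp

lemma mk_mul (a b : ℕ × Γ) :
    mk θ hθ a * mk θ hθ b = mk θ hθ (a.1 + b.1, pw θ b.1 a.2 * pw θ a.1 b.2) := rfl

/-- The canonical embedding `Γ → G`. -/
def emb : Γ →* G θ hθ :=
  MonoidHom.mk' (fun g => mk θ hθ (0, g))
    (by
      intro a b
      rw [mk_mul]
      apply sound
      simp)

lemma emb_inj : Function.Injective (emb θ hθ) := by
  intro a b h
  have := exact θ hθ h
  simpa using this

/-- The shift automorphism. -/
def phi : G θ hθ ≃* G θ hθ where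
  toFun := Quotient.map (fun a => (a.1, θ a.2))
    (by
      rintro ⟨n, g⟩ ⟨m, h⟩ h1
      replace h1 : pw θ m g = pw θ n h := h1
      show pw θ m (θ g) = pw θ n (θ h)
      rw [← pw_comm, h1, pw_comm])
  invFun := Quotient.map (fun a => (a.1 + 1, a.2))
    (by
      rintro ⟨n, g⟩ ⟨m, h⟩ h1
      replace h1 : pw θ m g = pw θ n h := h1
      show pw θ (m + 1) g = pw θ (n + 1) h
      simp only [pw_succ]
      rw [← pw_comm, h1, pw_comm])
  left_inv := by
    rintro ⟨a⟩
    show mk θ hθ (a.1 + 1, θ a.2) = mk θ hθ a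
    apply sound
    simp
  right_inv := by
    rintro ⟨a⟩
    show mk θ hθ (a.1 + 1, θ a.2) = mk θ hθ a
    apply sound
    simp
  map_mul' := by
    rintro ⟨a⟩ ⟨b⟩
    show mk θ hθ (a.1 + b.1, θ (pw θ b.1 a.2 * pw θ a.1 b.2))
      = mk θ hθ (a.1 + b.1, pw θ b.1 (θ a.2) * pw θ a.1 (θ b.2))
    apply sound
    simp [map_mul, pw_comm]

lemma phi_emb (g : Γ) : phi θ hθ (emb θ hθ g) = emb θ hθ (θ g) := rfl

end Stmt8Aux

/-- Let `Γ` be a group and `θ : Γ → Γ` an injective group homomorphism.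
Then there exist a group `G`, an injective group homomorphism `i : Γ → G`, and a group
automorphism `φ : G ≃* G` such that `φ (i g) = i (θ g)` for all `g ∈ Γ`: every injective
endomorphism of a group extends to an automorphism of some larger group. -/
theorem stmt8 {Γ : Type u} [Group Γ] (θ : Γ →* Γ) (hθ : Function.Injective θ) :
    ∃ (G : Type u) (_ : Group G) (i : Γ →* G) (φ : G ≃* G),
      Function.Injective i ∧ ∀ g : Γ, φ (i g) = i (θ g) := by
  exact ⟨Stmt8Aux.G θ hθ, inferInstance, Stmt8Aux.emb θ hθ, Stmt8Aux.phi θ hθ,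
    Stmt8Aux.emb_inj θ hθ, Stmt8Aux.phi_emb θ hθ⟩
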